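/- In the canonical RFA of a regular language L, the language accepted from each state L' ∈ Prm(Res(L)) is exactly L' itself, i.e., for every prime residual L' and every string w, w is accepted starting from state L' if and only if w ∈ L'. -/

import Mathlib

def res {α : Type*} (L : Set (List α)) (u : List α) : Set (List α) := {v | u ++ v ∈ L}

def Res {α : Type*} (L : Set (List α)) : Set (Set (List α)) := {L' | ∃ u, L' = res L u}

/-- A language is prime in a class `𝕃` if it belongs to `𝕃` and is not the union of the
languages of `𝕃` strictly contained in it. -/
def IsPrimeIn {α : Type*} (𝕃 : Set (Set (List α))) (L : Set (List α)) : Prop :=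
  L ∈ 𝕃 ∧ L ≠ ⋃₀ {L' | L' ∈ 𝕃 ∧ L' ⊂ L}

def IsRegularLang {α : Type*} (L : Set (List α)) : Prop :=
  ∃ (σ : Type) (_ : Fintype σ) (M : DFA α σ), ∀ w, w ∈ M.accepts ↔ w ∈ L

/-- The canonical RFA of a language `L`: states are the prime residual languages of `L`. -/
def canonicalRFA {α : Type*} (L : Set (List α)) :
    NFA α {L' : Set (List α) // IsPrimeIn (Res L) L'} where
  step q a := {q' | q'.1 ⊆ res q.1 [a]}
  start := {q | q.1 ⊆ L}
  accept := {q | [] ∈ q.1}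

/-- The language accepted from a single state `q` of an NFA. -/
def lq {α σ : Type*} (M : NFA α σ) (q : σ) : Set (List α) :=
  {w | (M.evalFrom {q} w ∩ M.accept).Nonempty}

lemma res_res {α : Type*} (L : Set (List α)) (u v : List α) :
    res (res L u) v = res L (u ++ v) := by
  ext w; simp [res, List.append_assoc]

lemma Res_finite {α : Type*} {L : Set (List α)} (hreg : IsRegularLang L) :
    (Res L).Finite := by
  obtain ⟨σ, hfin, M, hM⟩ := hreg
  have : Res L ⊆ Set.range (fun s : σ => {v | M.evalFrom s v ∈ M.accept}) := by
    rintro R ⟨u, rfl⟩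
    refine ⟨M.eval u, ?_⟩
    ext v
    simp only [Set.mem_setOf_eq, res]
    rw [show M.evalFrom (M.eval u) v = M.eval (u ++ v) from (M.evalFrom_of_append _ _ _).symm]
    have := hM (u ++ v)
    simp [DFA.mem_accepts] at this
    constructor
    · intro h; exact this.mp h
    · intro h; exact this.mpr h
  exact Set.Finite.subset (Set.finite_range _) this

lemma exists_prime {α : Type*} {L : Set (List α)} (hreg : IsRegularLang L)
    {R : Set (List α)} (hR : R ∈ Res L) {w : List α} (hw : w ∈ R) :
    ∃ P, IsPrimeIn (Res L) P ∧ P ⊆ R ∧ w ∈ P := by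
  set S : Set (Set (List α)) := {R' | R' ∈ Res L ∧ R' ⊆ R ∧ w ∈ R'} with hS
  have hfin : S.Finite := (Res_finite hreg).subset (fun x hx => hx.1)
  have hne : S.Nonempty := ⟨R, hR, subset_rfl, hw⟩
  obtain ⟨P, hP, hmin'⟩ := Set.Finite.exists_minimalFor id S hfin hne
  have hmin : ∀ a' ∈ S, id a' ≤ id P → P = a' := fun a' ha' hle => le_antisymm (hmin' ha' hle) hle
  refine ⟨P, ⟨hP.1, ?_⟩, hP.2.1, hP.2.2⟩
  intro heq
  have hwP : w ∈ ⋃₀ {L' | L' ∈ Res L ∧ L' ⊂ P} := heq ▸ hP.2.2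
  obtain ⟨L'', ⟨hL''res, hL''lt⟩, hwL''⟩ := hwP
  have : L'' ∈ S := ⟨hL''res, hL''lt.le.trans hP.2.1, hwL''⟩
  exact hL''lt.ne (hmin L'' this hL''lt.le).symm

lemma evalFrom_mono {α σ : Type*} (M : NFA α σ) {S T : Set σ} (h : S ⊆ T) (w : List α) :
    M.evalFrom S w ⊆ M.evalFrom T w := by
  induction w generalizing S T with
  | nil => exact h
  | cons a w ih =>
    apply ih
    intro s hs
    rw [NFA.mem_stepSet] at hs ⊢
    obtain ⟨t, ht, hst⟩ := hs
    exact ⟨t, h ht, hst⟩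

theorem canonicalRFA_state_language {α : Type*} (L : Set (List α)) (hreg : IsRegularLang L)
    (q : {L' : Set (List α) // IsPrimeIn (Res L) L'}) :
    ∀ w : List α, w ∈ lq (canonicalRFA L) q ↔ w ∈ q.1 := by
  intro w
  constructor
  · -- soundness
    have key : ∀ w : List α, ∀ S : Set {L' : Set (List α) // IsPrimeIn (Res L) L'},
        ((canonicalRFA L).evalFrom S w ∩ (canonicalRFA L).accept).Nonempty →
        ∃ p ∈ S, w ∈ p.1 := by
      intro w
      induction w with
      | nil =>
        intro S ⟨p, hp, hacc⟩
        exact ⟨p, hp, hacc⟩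
      | cons a w ih =>
        intro S h
        have h' : (((canonicalRFA L).evalFrom ((canonicalRFA L).stepSet S a) w)
            ∩ (canonicalRFA L).accept).Nonempty := h
        obtain ⟨p, hp, hwp⟩ := ih _ h'
        rw [NFA.mem_stepSet] at hp
        obtain ⟨t, htS, hpt⟩ := hp
        refine ⟨t, htS, ?_⟩
        have : w ∈ res t.1 [a] := hpt hwp
        simpa [res] using this
    intro hw
    obtain ⟨p, hp, hwp⟩ := key w {q} hw
    rwa [Set.mem_singleton_iff.mp hp] at hwp
  · -- completeness
    induction w generalizing q with
    | nil =>
      intro h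
      exact ⟨q, by simp [NFA.evalFrom], h⟩
    | cons a w ih =>
      intro h
      have hres : res q.1 [a] ∈ Res L := by
        obtain ⟨u, hu⟩ := q.2.1
        exact ⟨u ++ [a], by rw [hu, res_res]⟩
      have hwres : w ∈ res q.1 [a] := by simpa [res] using h
      obtain ⟨P, hPprime, hPsub, hwP⟩ := exists_prime hreg hres hwres
      obtain ⟨s, hs, hacc⟩ := ih ⟨P, hPprime⟩ hwP
      refine ⟨s, ?_, hacc⟩
      have hstep : (⟨P, hPprime⟩ : {L' : Set (List α) // IsPrimeIn (Res L) L'})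
          ∈ (canonicalRFA L).step q a := hPsub
      have hsub : ({⟨P, hPprime⟩} : Set _) ⊆ (canonicalRFA L).stepSet {q} a := by
        intro x hx
        rw [Set.mem_singleton_iff.mp hx, NFA.mem_stepSet]
        exact ⟨q, rfl, hstep⟩
      exact evalFrom_mono _ hsub w hs
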